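/- Let F : Set → Set preserve weak pullbacks and let S be a finite set, E ⊆ E' ⊆ T(I+1). If for all s, s' ∈ S with (β_{E'} ∘ α_S)(s) = (β_{E'} ∘ α_S)(s') one has both (o_t ∘ α_S)(s) = (o_t ∘ α_S)(s') and β_E ∘ δ_t ∘ F(α_S ∘ [id_S, 1_s]) = β_E ∘ δ_t ∘ F(α_S ∘ [id_S, 1_{s'}]) (as maps F(S+1) → O^E), then the wrapper (α_S, β_{E'}) is locally consistent with respect to β_E. -/

import Mathlib

open CategoryTheory

universe u

/-- Local consistency for `Set` automata: let `F` preserve weak pullbacks, `S` be finite and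
`E ⊆ E' ⊆ T(I+1)`. If any two row labels `s, s' ∈ S` with equal `E'`-rows have equal outputs
and equal one-step-context successor rows over `E`, then the contextual wrapper
`(α_S, β_{E'})` is locally consistent with respect to `β_E`. -/
theorem stmt16 (F : Type u ⥤ Type u)
    (hwpb : ∀ {X Y Z : Type u} (f : X → Z) (g : Y → Z) (u : F.obj X) (v : F.obj Y),
      F.map (TypeCat.ofHom f) u = F.map (TypeCat.ofHom g) v →
      ∃ w : F.obj {p : X × Y // f p.1 = g p.2},
        F.map (TypeCat.ofHom (fun p => p.1.1)) w = u ∧ F.map (TypeCat.ofHom (fun p => p.1.2)) w = v)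
    (T : CategoryTheory.Monad (Type u))
    (γ : ∀ X : Type u, F.obj (T.obj X) → T.obj X)
    (hfree : ∀ (X Z : Type u) (z : F.obj Z → Z) (f : X → Z),
      ∃! g : T.obj X → Z,
        (∀ a, g (T.η.app X a) = f a) ∧ (∀ b, g (γ X b) = z (F.map (TypeCat.ofHom g) b)))
    (I O Qt : Type u)
    (δt : F.obj Qt → Qt) (it : I → Qt) (ot : Qt → O)
    (reach : T.obj I → Qt)
    (hreach1 : ∀ a, reach (T.η.app I a) = it a)
    (hreach2 : ∀ b, reach (γ I b) = δt (F.map (TypeCat.ofHom reach) b))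
    (sh : Qt → T.obj (I ⊕ PUnit.{u + 1}) → Qt)
    (hsh1 : ∀ q a, sh q (T.η.app (I ⊕ PUnit.{u + 1}) a) = Sum.elim it (fun _ => q) a)
    (hsh2 : ∀ q b, sh q (γ (I ⊕ PUnit.{u + 1}) b) = δt (F.map (TypeCat.ofHom (sh q)) b))
    (S : Set (T.obj I)) (hS : S.Finite)
    (E E' : Set (T.obj (I ⊕ PUnit.{u + 1}))) (hEE' : E ⊆ E')
    -- α_S, the restricted reachability map
    (αS : S → Qt) (hαS : ∀ s : S, αS s = reach (s : T.obj I))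
    -- the rows over E' and over E
    (βE' : Qt → (E' → O))
    (hβE' : ∀ q (e : E'), βE' q e = ot (sh q (e : T.obj (I ⊕ PUnit.{u + 1}))))
    (βE : Qt → (E → O))
    (hβE : ∀ q (e : E), βE q e = ot (sh q (e : T.obj (I ⊕ PUnit.{u + 1}))))
    -- main hypothesis: equal E'-rows imply equal outputs and equal successor rows over E
    (hmain : ∀ s s' : S, βE' (αS s) = βE' (αS s') →
      ot (αS s) = ot (αS s') ∧
      ∀ x : F.obj (S ⊕ PUnit.{u + 1}),
        βE (δt (F.map (TypeCat.ofHom (fun y : S ⊕ PUnit.{u + 1} => αS (Sum.elim id (fun _ => s) y))) x)) =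
          βE (δt (F.map (TypeCat.ofHom (fun y : S ⊕ PUnit.{u + 1} => αS (Sum.elim id (fun _ => s') y))) x))) :
    -- conclusion: (α_S, β_{E'}) is locally consistent w.r.t. β_E
    (∀ q q' : Qt, βE' q = βE' q' → βE q = βE q') ∧
    (∃ oW : Set.range (fun s : S => βE' (αS s)) → O,
      ∀ s : S, oW ⟨βE' (αS s), ⟨s, rfl⟩⟩ = ot (αS s)) ∧
    (∃ lcons : F.obj (Set.range (fun s : S => βE' (αS s))) → (E → O),
      ∀ y : F.obj S,
        lcons (F.map (TypeCat.ofHom (fun s : S =>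
            (⟨βE' (αS s), ⟨s, rfl⟩⟩ : Set.range (fun s : S => βE' (αS s))))) y) =
          βE (δt (F.map (TypeCat.ofHom αS) y))) := by
  classical
  haveI : Finite S := hS.to_subtype
  -- key swapping lemma
  have key : ∀ (P : Type u), Finite P → ∀ (g f : P → S),
      (∀ p, βE' (αS (f p)) = βE' (αS (g p))) →
      ∀ w : F.obj P,
      βE (δt (F.map (TypeCat.ofHom (fun p => αS (f p))) w)) = βE (δt (F.map (TypeCat.ofHom (fun p => αS (g p))) w)) := by
    intro P hP g
    haveI := hP
    haveI := Fintype.ofFinite P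
    suffices h : ∀ n (f : P → S),
        (Finset.univ.filter (fun p => f p ≠ g p)).card ≤ n →
        (∀ p, βE' (αS (f p)) = βE' (αS (g p))) →
        ∀ w : F.obj P,
        βE (δt (F.map (TypeCat.ofHom (fun p => αS (f p))) w)) = βE (δt (F.map (TypeCat.ofHom (fun p => αS (g p))) w)) by
      intro f hfg w; exact h _ f le_rfl hfg w
    intro n
    induction n with
    | zero =>
      intro f hcard hfg w
      have : ∀ p, f p = g p := by
        intro p
        by_contra hne
        have hmem : p ∈ Finset.univ.filter (fun p => f p ≠ g p) := by
          simp [hne]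
        have := Finset.card_pos.mpr ⟨p, hmem⟩
        omega
      have : f = g := funext this
      subst this; rfl
    | succ n ih =>
      intro f hcard hfg w
      by_cases hfgeq : ∀ p, f p = g p
      · have : f = g := funext hfgeq
        subst this; rfl
      · push_neg at hfgeq
        obtain ⟨p₀, hp₀⟩ := hfgeq
        set f' : P → S := Function.update f p₀ (g p₀) with hf'
        have hmem : p₀ ∈ Finset.univ.filter (fun p => f p ≠ g p) := by simp [hp₀]
        have hcard' : (Finset.univ.filter (fun p => f' p ≠ g p)).card ≤ n := by
          have hsub : Finset.univ.filter (fun p => f' p ≠ g p) ⊆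
              (Finset.univ.filter (fun p => f p ≠ g p)).erase p₀ := by
            intro p hp
            simp only [Finset.mem_filter, Finset.mem_univ, true_and] at hp
            have hpne : p ≠ p₀ := by
              intro h; subst h
              simp [hf', Function.update_self] at hp
            rw [hf', Function.update_of_ne hpne] at hp
            simp [Finset.mem_erase, hpne, hp]
          have := Finset.card_le_card hsub
          rw [Finset.card_erase_of_mem hmem] at this
          omega
        have hfg' : ∀ p, βE' (αS (f' p)) = βE' (αS (g p)) := by
          intro p
          by_cases hp : p = p₀
          · subst hp; rw [hf', Function.update_self]
          · rw [hf', Function.update_of_ne hp]; exact hfg p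
        -- one swap: from f to f'
        set h : P → (S ⊕ PUnit.{u+1}) :=
          fun p => if p = p₀ then Sum.inr PUnit.unit else Sum.inl (f p) with hh
        have e1 : F.map (TypeCat.ofHom (fun p => αS (f p))) w
            = F.map (TypeCat.ofHom (fun y : S ⊕ PUnit.{u+1} => αS (Sum.elim id (fun _ => f p₀) y)))
                (F.map (TypeCat.ofHom h) w) := by
          rw [← FunctorToTypes.map_comp_apply]
          have heq : (fun p => αS (f p))
              = fun p => (fun y : S ⊕ PUnit.{u+1} => αS (Sum.elim id (fun _ => f p₀) y)) (h p) := by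
            funext p
            by_cases hp : p = p₀
            · subst hp; simp [hh]
            · simp [hh, hp]
          exact congrArg (fun φ => F.map (TypeCat.ofHom φ) w) heq
        have e2 : F.map (TypeCat.ofHom (fun p => αS (f' p))) w
            = F.map (TypeCat.ofHom (fun y : S ⊕ PUnit.{u+1} => αS (Sum.elim id (fun _ => g p₀) y)))
                (F.map (TypeCat.ofHom h) w) := by
          rw [← FunctorToTypes.map_comp_apply]
          have heq : (fun p => αS (f' p))
              = fun p => (fun y : S ⊕ PUnit.{u+1} => αS (Sum.elim id (fun _ => g p₀) y)) (h p) := by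
            funext p
            by_cases hp : p = p₀
            · subst hp; simp [hh, hf']
            · simp [hh, hf', hp, Function.update_of_ne hp]
          exact congrArg (fun φ => F.map (TypeCat.ofHom φ) w) heq
        have hswap := (hmain (f p₀) (g p₀) (hfg p₀)).2 (F.map (TypeCat.ofHom h) w)
        calc βE (δt (F.map (TypeCat.ofHom (fun p => αS (f p))) w))
            = βE (δt (F.map (TypeCat.ofHom (fun p => αS (f' p))) w)) := by rw [e1, e2]; exact hswap
          _ = βE (δt (F.map (TypeCat.ofHom (fun p => αS (g p))) w)) := ih f' hcard' hfg' w
  refine ⟨?_, ?_, ?_⟩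
  · -- quotient comparison: E ⊆ E'
    intro q q' hqq'
    funext e
    have := congrFun hqq' ⟨(e : T.obj (I ⊕ PUnit.{u+1})), hEE' e.2⟩
    rw [hβE' , hβE'] at this
    rw [hβE, hβE]
    exact this
  · -- output map oW
    refine ⟨fun r => ot (αS (Classical.choose r.2)), fun s => ?_⟩
    have hspec := Classical.choose_spec
      (⟨s, rfl⟩ : ∃ s' : S, βE' (αS s') = βE' (αS s))
    exact (hmain _ s hspec).1
  · -- lcons
    set τ : S → Set.range (fun s : S => βE' (αS s)) :=
      fun s => ⟨βE' (αS s), ⟨s, rfl⟩⟩ with hτ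
    set σ : Set.range (fun s : S => βE' (αS s)) → S :=
      fun r => Classical.choose r.2 with hσ
    refine ⟨fun x => βE (δt (F.map (TypeCat.ofHom (fun r => αS (σ r))) x)), fun y => ?_⟩
    show βE (δt (F.map (TypeCat.ofHom (fun r => αS (σ r))) (F.map (TypeCat.ofHom τ) y))) = βE (δt (F.map (TypeCat.ofHom αS) y))
    rw [← FunctorToTypes.map_comp_apply]
    have hrow : ∀ s : S, βE' (αS (σ (τ s))) = βE' (αS s) := by
      intro s
      exact Classical.choose_spec (⟨s, rfl⟩ : ∃ s' : S, βE' (αS s') = βE' (αS s))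
    have hk := key S inferInstance (fun s => s) (fun s => σ (τ s)) hrow y
    calc βE (δt (F.map (TypeCat.ofHom τ ≫ TypeCat.ofHom (fun r => αS (σ r))) y))
        = βE (δt (F.map (TypeCat.ofHom (fun s : S => αS (σ (τ s)))) y)) := rfl
      _ = βE (δt (F.map (TypeCat.ofHom (fun s : S => αS s)) y)) := hk
      _ = βE (δt (F.map (TypeCat.ofHom αS) y)) := rfl
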